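/- For all p ≥ 2, 1/p ≤ 1/Γ(1/p) ≤ 1.2/p, where Γ is the Gamma function. -/

import Mathlib

open Real Set

/-- Chord upper bound from convexity of Γ. -/
lemma gamma_chord (a b t : ℝ) (ha : 0 < a) (hlt : a < b) (h1 : a ≤ t) (h2 : t ≤ b) :
    Real.Gamma t ≤ ((b - t) * Real.Gamma a + (t - a) * Real.Gamma b) / (b - a) := by
  have hb : 0 < b := ha.trans hlt
  have hba : (0:ℝ) < b - a := by linarith
  have hu : (0:ℝ) ≤ (b - t)/(b - a) := div_nonneg (by linarith) (by linarith)
  have hv : (0:ℝ) ≤ (t - a)/(b - a) := div_nonneg (by linarith) (by linarith)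
  have hsum : (b - t)/(b - a) + (t - a)/(b - a) = 1 := by
    rw [← add_div, div_eq_one_iff_eq (by linarith)]; ring
  have h := Real.convexOn_Gamma.2 (mem_Ioi.2 ha) (mem_Ioi.2 hb) hu hv hsum
  have harg : (b - t)/(b - a) * a + (t - a)/(b - a) * b = t := by
    field_simp; ring
  simp only [smul_eq_mul, harg] at h
  have : (b - t)/(b - a) * Real.Gamma a + (t - a)/(b - a) * Real.Gamma b
      = ((b - t) * Real.Gamma a + (t - a) * Real.Gamma b) / (b - a) := by ring
  linarith [h, this.le, this.ge]

lemma sqrt_pi_bounds : 1.7724 < √π ∧ √π < 1.7725 := by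
  have h1 : √π * √π = π := Real.mul_self_sqrt Real.pi_pos.le
  have h2 : (0:ℝ) < √π := Real.sqrt_pos.2 Real.pi_pos
  have hlo := Real.pi_gt_d6
  have hhi := Real.pi_lt_d6
  constructor <;> nlinarith

lemma sqrt_two_bounds : 1.4142 < √2 ∧ √2 < 1.4143 := by
  have h1 : √2 * √2 = 2 := Real.mul_self_sqrt (by norm_num)
  have h2 : (0:ℝ) < √2 := Real.sqrt_pos.2 (by norm_num)
  constructor <;> nlinarith

lemma gamma_three_half : Real.Gamma (3/2) = √π / 2 := by
  rw [show (3/2:ℝ) = 1/2 + 1 by norm_num, Real.Gamma_add_one (by norm_num),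
    Real.Gamma_one_half_eq]
  ring

lemma gamma_two : Real.Gamma 2 = 1 := by
  rw [show (2:ℝ) = 1 + 1 by norm_num, Real.Gamma_add_one one_ne_zero, Real.Gamma_one]
  ring

lemma gamma_prod : Real.Gamma (5/4) * Real.Gamma (7/4) = 3 * π * √2 / 16 := by
  have h := Real.Gamma_mul_Gamma_one_sub (1/4)
  rw [show (1:ℝ) - 1/4 = 3/4 by norm_num, show π * (1/4) = π/4 by ring,
    Real.sin_pi_div_four] at h
  have h54 : Real.Gamma (5/4) = (1/4) * Real.Gamma (1/4) := by
    rw [show (5/4:ℝ) = 1/4 + 1 by norm_num, Real.Gamma_add_one (by norm_num)]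
  have h74 : Real.Gamma (7/4) = (3/4) * Real.Gamma (3/4) := by
    rw [show (7/4:ℝ) = 3/4 + 1 by norm_num, Real.Gamma_add_one (by norm_num)]
  have hr : (0:ℝ) < √2 := Real.sqrt_pos.2 (by norm_num)
  have hr2 : √2 * √2 = 2 := Real.mul_self_sqrt (by norm_num)
  have key : π / (√2/2) = π * √2 := by
    rw [eq_comm, eq_div_iff (by positivity)]
    calc π * √2 * (√2/2) = π * (√2 * √2) / 2 := by ring
      _ = π := by rw [hr2]; ring
  rw [h54, h74, show (1/4:ℝ) * Real.Gamma (1/4) * (3/4 * Real.Gamma (3/4))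
      = 3/16 * (Real.Gamma (1/4) * Real.Gamma (3/4)) by ring, h, key]
  ring

/-- Main lower bound: Γ(t) ≥ 5/6 on (1, 3/2]. -/
lemma gamma_lb {t : ℝ} (h1 : 1 < t) (h2 : t ≤ 3/2) : 5/6 ≤ Real.Gamma t := by
  obtain ⟨hg1, hg2⟩ := sqrt_pi_bounds
  obtain ⟨hr1, hr2⟩ := sqrt_two_bounds
  have hpi1 := Real.pi_gt_d6
  have hpi2 := Real.pi_lt_d6
  have h32 := gamma_three_half
  have h2' := gamma_two
  have h1' := Real.Gamma_one
  have hu54 : Real.Gamma (5/4) ≤ (√π + 2) / 4 := by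
    have := gamma_chord 1 (3/2) (5/4) (by norm_num) (by norm_num) (by norm_num) (by norm_num)
    rw [h32, h1'] at this
    have e : ((3/2 - 5/4) * 1 + (5/4 - 1) * (√π / 2)) / ((3:ℝ)/2 - 1) = (√π + 2)/4 := by ring
    linarith [e.le, e.ge]
  have hu74 : Real.Gamma (7/4) ≤ (√π + 2) / 4 := by
    have := gamma_chord (3/2) 2 (7/4) (by norm_num) (by norm_num) (by norm_num) (by norm_num)
    rw [h32, h2'] at this
    have e : ((2 - 7/4) * (√π / 2) + (7/4 - 3/2) * 1) / ((2:ℝ) - 3/2) = (√π + 2)/4 := by ring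
    linarith [e.le, e.ge]
  have hp54 : 0 < Real.Gamma (5/4) := Real.Gamma_pos_of_pos (by norm_num)
  have hp74 : 0 < Real.Gamma (7/4) := Real.Gamma_pos_of_pos (by norm_num)
  have hprod := gamma_prod
  have hl54 : 0.883 ≤ Real.Gamma (5/4) := by
    nlinarith [mul_le_mul_of_nonneg_left hu74 hp54.le]
  rcases le_or_gt t (5/4) with hc | hc
  · rcases eq_or_lt_of_le hc with hc' | hc'
    · rw [hc']; linarith
    · have hs := Real.convexOn_Gamma.slope_mono_adjacent (x := t) (y := 5/4) (z := 3/2)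
        (mem_Ioi.2 (by linarith)) (mem_Ioi.2 (by norm_num)) hc' (by norm_num)
      rw [h32] at hs
      have hd1 : (0:ℝ) < 5/4 - t := by linarith
      rw [div_le_div_iff₀ hd1 (by norm_num)] at hs
      nlinarith [hs]
  · rcases le_or_gt t (13/10) with hc2 | hc2
    · have hs := Real.convexOn_Gamma.slope_mono_adjacent (x := 1) (y := 5/4) (z := t)
        (mem_Ioi.2 (by norm_num)) (mem_Ioi.2 (by linarith)) (by norm_num) hc
      rw [h1'] at hs
      have hd1 : (0:ℝ) < t - 5/4 := by linarith
      rw [div_le_div_iff₀ (by norm_num) hd1] at hs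
      nlinarith [hs]
    · rcases eq_or_lt_of_le h2 with hc' | hc'
      · rw [hc', h32]; linarith
      · have hs := Real.convexOn_Gamma.slope_mono_adjacent (x := t) (y := 3/2) (z := 7/4)
          (mem_Ioi.2 (by linarith)) (mem_Ioi.2 (by norm_num)) hc' (by norm_num)
        rw [h32] at hs
        have hd1 : (0:ℝ) < 3/2 - t := by linarith
        rw [div_le_div_iff₀ hd1 (by norm_num)] at hs
        nlinarith [hs]

theorem stmt_10 (p : ℝ) (hp : 2 ≤ p) :
    1 / p ≤ 1 / Real.Gamma (1 / p) ∧ 1 / Real.Gamma (1 / p) ≤ 1.2 / p := by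
  have hp0 : 0 < p := by linarith
  have hx0 : 0 < 1/p := by positivity
  have hx2 : 1/p ≤ 1/2 := by
    rw [div_le_div_iff₀ hp0 (by norm_num)]; linarith
  have hgpos : 0 < Real.Gamma (1/p) := Real.Gamma_pos_of_pos hx0
  have hrec : Real.Gamma (1/p + 1) = (1/p) * Real.Gamma (1/p) :=
    Real.Gamma_add_one (ne_of_gt hx0)
  have hub : Real.Gamma (1/p + 1) ≤ 1 := by
    have := gamma_chord 1 2 (1/p + 1) (by norm_num) (by norm_num) (by linarith) (by linarith)
    rw [Real.Gamma_one, gamma_two] at this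
    nlinarith [this]
  have hlb : 5/6 ≤ Real.Gamma (1/p + 1) := gamma_lb (by linarith) (by linarith)
  rw [hrec] at hub hlb
  have e : p * (1/p * Real.Gamma (1/p)) = Real.Gamma (1/p) := by field_simp
  have hle : Real.Gamma (1/p) ≤ p := by
    have := mul_le_mul_of_nonneg_left hub hp0.le
    rw [e, mul_one] at this; exact this
  have hge : 5/6 * p ≤ Real.Gamma (1/p) := by
    have := mul_le_mul_of_nonneg_left hlb hp0.le
    rw [e] at this; linarith
  refine ⟨one_div_le_one_div_of_le hgpos hle, ?_⟩
  rw [div_le_div_iff₀ hgpos hp0]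
  nlinarith [hge]
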